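/- Let Π = {Ξ₁,…,Ξₙ} be a finite family of type sets over a finite nonempty set T_Σ of types, with each Ξᵢ ⊆ T_Σ. If the intersection ⋂Π = Ξ₁ ∩ … ∩ Ξₙ is nonempty, then the set of df-minimal types w.r.t. Π equals ⋂Π, for any pseudo-distance d and aggregation function f. -/

import Mathlib

open Classical in
/-- Distance from a type to a type set: the minimum over the set, with a
default value `D` for the empty set. -/
noncomputable def distToSet {τ : Type*} (d : τ → τ → NNReal) (D : NNReal)
    (t : τ) (Ξ : Finset τ) : NNReal :=
  if h : Ξ.Nonempty then Ξ.inf' h (d t) else D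

open Classical in
/-- If `⋂ Π` is nonempty, the `df`-minimal types w.r.t. `Π` are exactly `⋂ Π`. -/
theorem minimal_types_eq_inter {τ : Type*} [DecidableEq τ] {n : ℕ}
    (T : Finset τ) (hT : T.Nonempty) (Ξ : Fin n → Finset τ)
    (hsub : ∀ i, Ξ i ⊆ T)
    (d : τ → τ → NNReal)
    (hd₀ : ∀ t₁ t₂, d t₁ t₂ = 0 ↔ t₁ = t₂)
    (hdsymm : ∀ t₁ t₂, d t₁ t₂ = d t₂ t₁)
    (D : NNReal)
    (f : (Fin n → NNReal) → NNReal)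
    (hfmono : ∀ x y : Fin n → NNReal, (∀ i, x i ≤ y i) → f x ≤ f y)
    (hfzero : ∀ x : Fin n → NNReal, f x = 0 ↔ ∀ i, x i = 0)
    (hinter : ∃ t, ∀ i, t ∈ Ξ i) :
    {t ∈ T | ∀ t' ∈ T,
        f (fun i => distToSet d D t (Ξ i)) ≤ f (fun i => distToSet d D t' (Ξ i))}
      = {t ∈ T | ∀ i, t ∈ Ξ i} := by
  obtain ⟨t₀, ht₀⟩ := hinter
  have hzero : ∀ t, (∀ i, t ∈ Ξ i) → ∀ i, distToSet d D t (Ξ i) = 0 := by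
    intro t ht i
    have hne : (Ξ i).Nonempty := ⟨t, ht i⟩
    have hle : (Ξ i).inf' hne (d t) ≤ d t t := Finset.inf'_le _ (ht i)
    rw [(hd₀ t t).mpr rfl] at hle
    simp [distToSet, hne, le_antisymm hle zero_le]
  have hf0 : ∀ t, (∀ i, t ∈ Ξ i) → f (fun i => distToSet d D t (Ξ i)) = 0 := by
    intro t ht
    exact (hfzero _).mpr (hzero t ht)
  ext t
  simp only [Finset.mem_filter]
  constructor
  · rintro ⟨htT, hmin⟩
    refine ⟨htT, fun i => ?_⟩
    have ht₀T : t₀ ∈ T := hsub i (ht₀ i)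
    have h1 : f (fun i => distToSet d D t (Ξ i)) ≤ 0 := by
      rw [← hf0 t₀ ht₀]; exact hmin t₀ ht₀T
    have h2 : f (fun i => distToSet d D t (Ξ i)) = 0 :=
      le_antisymm h1 zero_le
    have h3 := (hfzero _).mp h2 i
    have hne : (Ξ i).Nonempty := ⟨t₀, ht₀ i⟩
    simp only [distToSet, dif_pos hne] at h3
    obtain ⟨s, hs, hds⟩ := Finset.exists_mem_eq_inf' hne (d t)
    rw [hds] at h3
    rwa [(hd₀ t s).mp h3]
  · rintro ⟨htT, ht⟩
    refine ⟨htT, fun t' _ => ?_⟩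
    rw [hf0 t ht]
    exact zero_le
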